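/- Strict monotonicity of q-deformed irrationals: let 0 < q < 1 and let t < t′ be two irrational real numbers. Then [t]_q < [t′]_q. In particular, the q-deformation map t ↦ [t]_q is injective on the irrationals. -/

import Mathlib

open Matrix Filter

/-- The q-deformed generator σ₁(q) = [[q⁻¹, −q⁻¹], [0, 1]]. -/
noncomputable def sig1 (q : ℝ) : Matrix (Fin 2) (Fin 2) ℝ := !![q⁻¹, -q⁻¹; 0, 1]

/-- The q-deformed generator σ₂(q) = [[1, 0], [1, q⁻¹]]. -/
noncomputable def sig2 (q : ℝ) : Matrix (Fin 2) (Fin 2) ℝ := !![1, 0; 1, q⁻¹]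

/-- `betaMat q a k` is the product of the first `k` alternating factors
`σ₁(q)^{-a 1} · σ₂(q)^{a 2} · σ₁(q)^{-a 3} ⋯` (indices start at 1). -/
noncomputable def betaMat (q : ℝ) (a : ℕ → ℤ) : ℕ → Matrix (Fin 2) (Fin 2) ℝ
  | 0 => 1
  | k + 1 => betaMat q a k *
      (if (k + 1) % 2 = 1 then sig1 q ^ (-(a (k + 1))) else sig2 q ^ (a (k + 1)))

/-- Möbius action of a 2×2 real matrix on a real number: z ↦ (Az + B)/(Cz + D). -/
noncomputable def mobiusAct (M : Matrix (Fin 2) (Fin 2) ℝ) (z : ℝ) : ℝ :=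
  (M 0 0 * z + M 0 1) / (M 1 0 * z + M 1 1)

/-- Möbius image of ∞ under a 2×2 real matrix: ∞ ↦ A/C. -/
noncomputable def mobiusInf (M : Matrix (Fin 2) (Fin 2) ℝ) : ℝ := M 0 0 / M 1 0

/-- `a` (on indices 1,…,2n) is an even continued form: either `a₁ ≥ 0` and `aᵢ ≥ 1` for
`2 ≤ i ≤ 2n`, or `a₁ ≤ 0` and `aᵢ ≤ −1` for `2 ≤ i ≤ 2n`. -/
def IsEvenForm (n : ℕ) (a : ℕ → ℤ) : Prop :=
  1 ≤ n ∧ ((0 ≤ a 1 ∧ ∀ i, 2 ≤ i → i ≤ 2 * n → 1 ≤ a i)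
    ∨ (a 1 ≤ 0 ∧ ∀ i, 2 ≤ i → i ≤ 2 * n → a i ≤ -1))

/-- Value of the continued fraction `a i + 1/(a (i+1) + 1/(⋯ + 1/(a last)))`. -/
def cfVal (a : ℕ → ℤ) (last i : ℕ) : ℚ :=
  if last ≤ i then (a i : ℚ)
  else (a i : ℚ) + 1 / cfVal a last (i + 1)
termination_by last - i
decreasing_by omega

/-- `a` (on indices 1,…,2n) is the even continued fraction expansion of the rational `x`:
for `x ≠ 0` it is an even continued form of value `x`; by convention the expansion of `0`
is `(−1, 1)`. -/
def IsECFExp (n : ℕ) (a : ℕ → ℤ) (x : ℚ) : Prop :=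
  (x ≠ 0 ∧ IsEvenForm n a ∧ cfVal a (2 * n) 1 = x) ∨
  (x = 0 ∧ n = 1 ∧ a 1 = -1 ∧ a 2 = 1)

/-- The right q-deformation attached to expansion data `(n, a)`:
the image of ∞ under the Möbius transformation of β(a, q). -/
noncomputable def sharpVal (q : ℝ) (n : ℕ) (a : ℕ → ℤ) : ℝ :=
  mobiusInf (betaMat q a (2 * n))

/-- The left q-deformation attached to expansion data `(n, a)`:
the image of 1/(1−q) under the Möbius transformation of β(a, q). -/
noncomputable def flatVal (q : ℝ) (n : ℕ) (a : ℕ → ℤ) : ℝ :=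
  mobiusAct (betaMat q a (2 * n)) (1 / (1 - q))

/-- `IsQIrrDef q t L` says that L is the q-deformation [t]_q of the (irrational) real t:
for every sequence of rationals xₘ → t (with expansion data), [xₘ]♯_q → L. -/
def IsQIrrDef (q t L : ℝ) : Prop :=
  ∀ (x : ℕ → ℚ) (n : ℕ → ℕ) (A : ℕ → ℕ → ℤ),
    Tendsto (fun m => (x m : ℝ)) atTop (nhds t) →
    (∀ m, IsECFExp (n m) (A m) (x m)) →
    Tendsto (fun m => sharpVal q (n m) (A m)) atTop (nhds L)

namespace QAux

noncomputable def eE (q : ℝ) (x : ℤ) : ℝ := (1 - q ^ x) / (1 - q)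
noncomputable def fF (q : ℝ) (c : ℤ) : ℝ := (q ^ (-c) - 1) / (q⁻¹ - 1)

variable {q : ℝ}

lemma hqne0 (hq0 : 0 < q) : q ≠ 0 := ne_of_gt hq0

lemma one_sub_ne (hqne : q ≠ 1) : 1 - q ≠ 0 := sub_ne_zero.mpr (Ne.symm hqne)

lemma inv_sub_ne (hq0 : 0 < q) (hqne : q ≠ 1) : q⁻¹ - 1 ≠ 0 := by
  have : q⁻¹ ≠ 1 := by simpa [inv_eq_one] using hqne
  exact sub_ne_zero.mpr this

lemma one_sub_inv_ne (hq0 : 0 < q) (hqne : q ≠ 1) : 1 - q⁻¹ ≠ 0 := by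
  have h := inv_sub_ne hq0 hqne
  intro h'; exact h (by linarith [sub_eq_zero.mp h'])

lemma zp (hq0 : 0 < q) (z : ℤ) : 0 < q ^ z := zpow_pos hq0 z

lemma zpne (hq0 : 0 < q) (z : ℤ) : q ^ z ≠ 0 := ne_of_gt (zp hq0 z)

lemma eE_zero : eE q 0 = 0 := by simp [eE]

lemma eE_one (hqne : q ≠ 1) : eE q 1 = 1 := by
  have h1 := one_sub_ne hqne
  rw [eE, zpow_one, div_self h1]

lemma eE_step (hq0 : 0 < q) (hqne : q ≠ 1) (x : ℤ) : eE q (x + 1) = eE q x + q ^ x := by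
  have h0 := hqne0 hq0
  have h1 := one_sub_ne hqne
  have h : q ^ (x + 1) = q ^ x * q := by rw [zpow_add_one₀ h0]
  rw [eE, eE, h, div_add' _ _ _ h1]
  congr 1
  ring

lemma eE_strictMono (hq0 : 0 < q) (hqne : q ≠ 1) : StrictMono (eE q) := by
  apply strictMono_int_of_lt_succ
  intro x
  rw [eE_step hq0 hqne]
  nlinarith [zp hq0 x]

lemma eE_mono (hq0 : 0 < q) (hqne : q ≠ 1) {x y : ℤ} (h : x ≤ y) : eE q x ≤ eE q y :=
  (eE_strictMono hq0 hqne).monotone h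

lemma one_le_eE (hq0 : 0 < q) (hqne : q ≠ 1) {x : ℤ} (h : 1 ≤ x) : 1 ≤ eE q x := by
  have := eE_mono hq0 hqne h; rwa [eE_one hqne] at this

lemma eE_nonneg (hq0 : 0 < q) (hqne : q ≠ 1) {x : ℤ} (h : 0 ≤ x) : 0 ≤ eE q x := by
  have := eE_mono hq0 hqne h; rwa [eE_zero] at this

lemma eE_nonpos (hq0 : 0 < q) (hqne : q ≠ 1) {x : ℤ} (h : x ≤ 0) : eE q x ≤ 0 := by
  have := eE_mono hq0 hqne h; rwa [eE_zero] at this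

lemma fF_zero : fF q 0 = 0 := by simp [fF]

lemma fF_one (hq0 : 0 < q) (hqne : q ≠ 1) : fF q 1 = 1 := by
  have h1 := inv_sub_ne hq0 hqne
  have h : q ^ (-1 : ℤ) = q⁻¹ := by
    rw [_root_.zpow_neg, zpow_one]
  rw [fF, h, div_self h1]

lemma fF_step (hq0 : 0 < q) (hqne : q ≠ 1) (c : ℤ) : fF q (c + 1) = fF q c + q ^ (-c) := by
  have h0 := hqne0 hq0
  have h1 := inv_sub_ne hq0 hqne
  have hm1 : q ^ (-(1:ℤ)) = q⁻¹ := by rw [_root_.zpow_neg, zpow_one]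
  have h : q ^ (-(c + 1)) = q ^ (-c) * q⁻¹ := by
    rw [show -(c + 1) = -c + -1 by ring, zpow_add₀ h0, hm1]
  rw [fF, fF, h, div_add' _ _ _ h1]
  congr 1
  ring

lemma fF_strictMono (hq0 : 0 < q) (hqne : q ≠ 1) : StrictMono (fF q) := by
  apply strictMono_int_of_lt_succ
  intro c
  rw [fF_step hq0 hqne]
  nlinarith [zp hq0 (-c)]

lemma fF_mono (hq0 : 0 < q) (hqne : q ≠ 1) {x y : ℤ} (h : x ≤ y) : fF q x ≤ fF q y :=
  (fF_strictMono hq0 hqne).monotone h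

lemma one_le_fF (hq0 : 0 < q) (hqne : q ≠ 1) {c : ℤ} (h : 1 ≤ c) : 1 ≤ fF q c := by
  have := fF_mono hq0 hqne h; rwa [fF_one hq0 hqne] at this

lemma eE_neg_one (hq0 : 0 < q) (hqne : q ≠ 1) : eE q (-1) = -q⁻¹ := by
  have h0 := hqne0 hq0
  have h1 := one_sub_ne hqne
  have h : q ^ (-1 : ℤ) = q⁻¹ := by rw [_root_.zpow_neg, zpow_one]
  rw [eE, h]
  field_simp
  ring

lemma inv_zpow' (hq0 : 0 < q) (x : ℤ) : q⁻¹ ^ x = q ^ (-x) := by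
  rw [_root_.inv_zpow, ← _root_.zpow_neg]

lemma eE_inv (hq0 : 0 < q) (hqne : q ≠ 1) (x : ℤ) : eE q⁻¹ x = -q * eE q (-x) := by
  have h0 := hqne0 hq0
  have h1 := one_sub_ne hqne
  have h2 := one_sub_inv_ne hq0 hqne
  rw [eE, eE, inv_zpow' hq0]
  rw [show -q * ((1 - q ^ (-x)) / (1 - q)) = -q * (1 - q ^ (-x)) / (1 - q) by ring]
  rw [div_eq_div_iff h2 h1]
  field_simp
  ring

lemma fF_inv (hq0 : 0 < q) (hqne : q ≠ 1) (c : ℤ) : fF q (-c) = -q * fF q⁻¹ c := by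
  have h0 := hqne0 hq0
  have h1 := inv_sub_ne hq0 hqne
  have h1' := one_sub_ne hqne
  have h2 : (q⁻¹)⁻¹ - 1 ≠ 0 := by
    rw [inv_inv]
    intro h; exact hqne (by linarith [sub_eq_zero.mp h])
  have h3 : q - 1 ≠ 0 := fun h => hqne (by linarith [sub_eq_zero.mp h])
  rw [fF, fF, inv_zpow' hq0, neg_neg, inv_inv]
  rw [show -q * ((q ^ c - 1) / (q - 1)) = -q * (q ^ c - 1) / (q - 1) by ring]
  rw [div_eq_div_iff h1 h3]
  field_simp
  ring

/-- column-0 vector of the partial q-matrix products, right-to-left recursion.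
`true` = σ₁-position (odd index), `false` = σ₂-position (even index). -/
noncomputable def pv (q : ℝ) : Bool → List ℤ → ℝ × ℝ
  | _, [] => (1, 0)
  | true, x :: r => (q ^ x * (pv q false r).1 + eE q x * (pv q false r).2, (pv q false r).2)
  | false, c :: r => ((pv q true r).1, fF q c * (pv q true r).1 + q ^ (-c) * (pv q true r).2)

@[simp] lemma pv_nil (b : Bool) : pv q b [] = (1, 0) := by cases b <;> rfl

lemma pv_consR (x : ℤ) (r : List ℤ) :
    pv q true (x :: r) =
      (q ^ x * (pv q false r).1 + eE q x * (pv q false r).2, (pv q false r).2) := rfl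

lemma pv_consS (c : ℤ) (r : List ℤ) :
    pv q false (c :: r) =
      ((pv q true r).1, fF q c * (pv q true r).1 + q ^ (-c) * (pv q true r).2) := rfl

/-- rational value of the continued fraction given by a list. -/
def cfL : List ℤ → ℚ
  | [] => 0
  | z :: r => z + 1 / cfL r

@[simp] lemma cfL_nil : cfL [] = 0 := rfl
lemma cfL_cons (z : ℤ) (r : List ℤ) : cfL (z :: r) = z + 1 / cfL r := rfl

lemma cfL_neg : ∀ l : List ℤ, cfL (l.map (fun z => -z)) = -cfL l
  | [] => by simp
  | z :: r => by
    simp only [List.map_cons, cfL_cons, cfL_neg r]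
    push_cast
    rw [one_div_neg_eq_neg_one_div]
    ring

lemma pv_neg (hq0 : 0 < q) (hqne : q ≠ 1) :
    ∀ (l : List ℤ) (b : Bool), pv q b (l.map (fun z => -z)) =
      ((pv q⁻¹ b l).1, -q * (pv q⁻¹ b l).2)
  | [], b => by simp
  | x :: r, true => by
    have IH := pv_neg hq0 hqne r false
    simp only [List.map_cons, pv_consR, IH]
    rw [Prod.mk.injEq]
    refine ⟨?_, rfl⟩
    rw [eE_inv hq0 hqne, inv_zpow' hq0]
    ring
  | c :: r, false => by
    have IH := pv_neg hq0 hqne r true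
    simp only [List.map_cons, pv_consS, IH]
    rw [Prod.mk.injEq]
    refine ⟨rfl, ?_⟩
    rw [fF_inv hq0 hqne, inv_zpow' hq0, neg_neg]
    ring

lemma cf_core : ∀ (N : ℕ) (z : ℤ) (r : List ℤ), r.length ≤ N → (∀ w ∈ r, (1:ℤ) ≤ w) →
    ((r.length % 2 = 0 →
      ((z : ℚ) ≤ cfL (z :: r) ∧ cfL (z :: r) < z + 1 ∧ (r ≠ [] → (z : ℚ) < cfL (z :: r))))
    ∧ (r.length % 2 = 1 → ((z : ℚ) < cfL (z :: r) ∧ cfL (z :: r) ≤ z + 1))) := by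
  intro N
  induction N with
  | zero =>
    intro z r hlen _
    have : r = [] := List.eq_nil_of_length_eq_zero (Nat.le_zero.mp hlen)
    subst this
    constructor
    · intro _
      simp only [cfL_cons, cfL_nil, div_zero, add_zero]
      exact ⟨le_refl _, by linarith, fun h => absurd rfl h⟩
    · intro h; simp at h
  | succ N IH =>
    intro z r hlen hr
    cases r with
    | nil =>
      constructor
      · intro _
        simp only [cfL_cons, cfL_nil, div_zero, add_zero]
        exact ⟨le_refl _, by linarith, fun h => absurd rfl h⟩
      · intro h; simp at h
    | cons y r' =>
      have hy : (1:ℤ) ≤ y := hr y (by simp)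
      have hr' : ∀ w ∈ r', (1:ℤ) ≤ w := fun w hw => hr w (by simp [hw])
      have hlen' : r'.length ≤ N := by simp only [List.length_cons] at hlen; omega
      have IH' := IH y r' hlen' hr'
      constructor
      · -- r = y :: r' has even length, so r' odd : inner is R-type
        intro heven
        have hrodd : r'.length % 2 = 1 := by
          simp only [List.length_cons] at heven ⊢; omega
        obtain ⟨h1, h2⟩ := IH'.2 hrodd
        have hge1 : (1:ℚ) ≤ cfL (y :: r') := by
          have : (1:ℚ) ≤ (y:ℚ) := by exact_mod_cast hy
          linarith
        have hpos : (0:ℚ) < cfL (y :: r') := by linarith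
        have hd1 : 0 < 1 / cfL (y :: r') := by positivity
        have hy1 : (1:ℚ) ≤ (y:ℚ) := by exact_mod_cast hy
        have hd2 : 1 / cfL (y :: r') < 1 := by
          rw [div_lt_one hpos]; linarith
        rw [cfL_cons]
        refine ⟨by linarith, by linarith, fun _ => by linarith⟩
      · -- r odd length, r' even : inner is S-type
        intro hodd
        have hreven : r'.length % 2 = 0 := by
          simp only [List.length_cons] at hodd ⊢; omega
        obtain ⟨h1, h2, _⟩ := IH'.1 hreven
        have hge1 : (1:ℚ) ≤ cfL (y :: r') := by
          have : (1:ℚ) ≤ (y:ℚ) := by exact_mod_cast hy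
          linarith
        have hpos : (0:ℚ) < cfL (y :: r') := by linarith
        have hd1 : 0 < 1 / cfL (y :: r') := by positivity
        have hd2 : 1 / cfL (y :: r') ≤ 1 := by
          rw [div_le_one hpos]; exact hge1
        rw [cfL_cons]
        exact ⟨by linarith, by linarith⟩

/-- bounds for the top continued fraction value with arbitrary head. -/
lemma cfR_bounds (z : ℤ) (r : List ℤ) (hr : ∀ w ∈ r, (1:ℤ) ≤ w)
    (hodd : r.length % 2 = 1) : (z : ℚ) < cfL (z :: r) ∧ cfL (z :: r) ≤ z + 1 :=
  (cf_core r.length z r le_rfl hr).2 hodd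

lemma pv_core (hq0 : 0 < q) (hqne : q ≠ 1) :
    ∀ (N : ℕ) (z : ℤ) (r : List ℤ), r.length ≤ N → (∀ w ∈ r, (1:ℤ) ≤ w) →
    ((r.length % 2 = 0 → 1 ≤ z →
      (0 < (pv q false (z :: r)).1 ∧ 0 < (pv q false (z :: r)).2 ∧
       fF q z * (pv q false (z :: r)).1 ≤ (pv q false (z :: r)).2 ∧
       (pv q false (z :: r)).2 < fF q (z+1) * (pv q false (z :: r)).1 ∧
       (pv q false (z :: r)).1 ≤ (pv q false (z :: r)).2 ∧
       (r ≠ [] → fF q z * (pv q false (z :: r)).1 < (pv q false (z :: r)).2)))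
    ∧ (r.length % 2 = 1 →
      (0 < (pv q true (z :: r)).2 ∧
       eE q z * (pv q true (z :: r)).2 < (pv q true (z :: r)).1 ∧
       (pv q true (z :: r)).1 ≤ eE q (z+1) * (pv q true (z :: r)).2 ∧
       (0 ≤ z → 0 < (pv q true (z :: r)).1)))) := by
  intro N
  induction N with
  | zero =>
    intro z r hlen _
    have : r = [] := List.eq_nil_of_length_eq_zero (Nat.le_zero.mp hlen)
    subst this
    constructor
    · intro _ hz
      have hfc : 1 ≤ fF q z := one_le_fF hq0 hqne hz
      have hfcs : fF q z < fF q (z+1) := fF_strictMono hq0 hqne (by omega)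
      simp only [pv_consS, pv_nil, mul_one, mul_zero, add_zero]
      exact ⟨one_pos, by linarith, le_refl _, by linarith, hfc, fun h => absurd rfl h⟩
    · intro h; simp at h
  | succ N IH =>
    intro z r hlen hr
    cases r with
    | nil =>
      constructor
      · intro _ hz
        have hfc : 1 ≤ fF q z := one_le_fF hq0 hqne hz
        have hfcs : fF q z < fF q (z+1) := fF_strictMono hq0 hqne (by omega)
        simp only [pv_consS, pv_nil, mul_one, mul_zero, add_zero]
        exact ⟨one_pos, by linarith, le_refl _, by linarith, hfc, fun h => absurd rfl h⟩
      · intro h; simp at h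
    | cons y r' =>
      have hy : (1:ℤ) ≤ y := hr y (by simp)
      have hr' : ∀ w ∈ r', (1:ℤ) ≤ w := fun w hw => hr w (by simp [hw])
      have hlen' : r'.length ≤ N := by simp only [List.length_cons] at hlen; omega
      have IH' := IH y r' hlen' hr'
      constructor
      · -- S-step : z :: (y :: r') at flag false, inner (y :: r') at flag true
        intro heven hz
        have hrodd : r'.length % 2 = 1 := by
          simp only [List.length_cons] at heven ⊢; omega
        obtain ⟨hwt, hlow, hup, hppos'⟩ := IH'.2 hrodd
        set pt := (pv q true (y :: r')).1 with hptdef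
        set wt := (pv q true (y :: r')).2 with hwtdef
        have hEy : 1 ≤ eE q y := one_le_eE hq0 hqne hy
        have hptpos : 0 < pt := hppos' (by omega)
        have hptwt : wt < pt := by nlinarith
        have hqc : 0 < q ^ (-z) := zp hq0 _
        have hfc : 1 ≤ fF q z := one_le_fF hq0 hqne hz
        simp only [pv_consS]
        refine ⟨hptpos, by nlinarith, by nlinarith, ?_, by nlinarith,
          fun _ => by nlinarith⟩
        rw [fF_step hq0 hqne]
        nlinarith
      · -- R-step : z :: (y :: r') at flag true, inner at flag false
        intro hodd
        have hreven : r'.length % 2 = 0 := by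
          simp only [List.length_cons] at hodd ⊢; omega
        obtain ⟨hppos, hwpos, _, _, hptwt, _⟩ := IH'.1 hreven hy
        set pt := (pv q false (y :: r')).1 with hptdef
        set wt := (pv q false (y :: r')).2 with hwtdef
        have hqx : 0 < q ^ z := zp hq0 _
        simp only [pv_consR]
        refine ⟨hwpos, by nlinarith, ?_, fun hz0 => ?_⟩
        · rw [eE_step hq0 hqne]; nlinarith
        · have := eE_nonneg hq0 hqne hz0
          nlinarith

lemma mono_core (hq0 : 0 < q) (hqne : q ≠ 1) :
    ∀ (N : ℕ) (A B : List ℤ), A.length ≤ N →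
    ((∀ x rA y rB, A = x :: rA → B = y :: rB →
       (∀ w ∈ rA, (1:ℤ) ≤ w) → (∀ w ∈ rB, (1:ℤ) ≤ w) →
       rA.length % 2 = 1 → rB.length % 2 = 1 →
       cfL A < cfL B →
       (pv q true A).1 * (pv q true B).2 < (pv q true B).1 * (pv q true A).2)
    ∧ (∀ c rC d rD, A = c :: rC → B = d :: rD →
       (∀ w ∈ A, (1:ℤ) ≤ w) → (∀ w ∈ B, (1:ℤ) ≤ w) →
       rC.length % 2 = 0 → rD.length % 2 = 0 →
       cfL B < cfL A →
       (pv q false A).1 * (pv q false B).2 < (pv q false B).1 * (pv q false A).2)) := by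
  intro N
  induction N with
  | zero =>
    intro A B hlen
    have : A = [] := List.eq_nil_of_length_eq_zero (Nat.le_zero.mp hlen)
    subst this
    exact ⟨fun x rA y rB h => by simp at h, fun c rC d rD h => by simp at h⟩
  | succ N IH =>
    intro A B hlen
    constructor
    · -- R-claim
      rintro x rA y rB rfl rfl hrA hrB hoA hoB hcf
      -- tails are odd-length hence nonempty
      obtain ⟨c, rC, rfl⟩ : ∃ c rC, rA = c :: rC := by
        cases rA with
        | nil => simp at hoA
        | cons c rC => exact ⟨c, rC, rfl⟩
      obtain ⟨d, rD, rfl⟩ : ∃ d rD, rB = d :: rD := by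
        cases rB with
        | nil => simp at hoB
        | cons d rD => exact ⟨d, rD, rfl⟩
      have hc : (1:ℤ) ≤ c := hrA c (by simp)
      have hd : (1:ℤ) ≤ d := hrB d (by simp)
      obtain ⟨hwA, hlowA, hupA, _⟩ :=
        (pv_core hq0 hqne (c :: rC).length x (c :: rC) le_rfl hrA).2 hoA
      obtain ⟨hwB, hlowB, hupB, _⟩ :=
        (pv_core hq0 hqne (d :: rD).length y (d :: rD) le_rfl hrB).2 hoB
      set pA := (pv q true (x :: c :: rC)).1
      set wA := (pv q true (x :: c :: rC)).2
      set pB := (pv q true (y :: d :: rD)).1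
      set wB := (pv q true (y :: d :: rD)).2
      obtain ⟨hcfA1, hcfA2⟩ := cfR_bounds x (c :: rC) hrA hoA
      obtain ⟨hcfB1, hcfB2⟩ := cfR_bounds y (d :: rD) hrB hoB
      rcases lt_trichotomy x y with hxy | hxy | hxy
      · have hxy' : x + 1 ≤ y := by omega
        have e2 : eE q (x+1) ≤ eE q y := eE_mono hq0 hqne hxy'
        calc pA * wB ≤ (eE q (x+1) * wA) * wB :=
              mul_le_mul_of_nonneg_right hupA hwB.le
          _ ≤ (eE q y * wA) * wB :=
              mul_le_mul_of_nonneg_right (mul_le_mul_of_nonneg_right e2 hwA.le) hwB.le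
          _ = (eE q y * wB) * wA := by ring
          _ < pB * wA := mul_lt_mul_of_pos_right hlowB hwA
      · subst hxy
        -- equal heads : recurse at S-level
        have hcf' : cfL (d :: rD) < cfL (c :: rC) := by
          have eA : cfL (x :: c :: rC) = (x:ℚ) + 1 / cfL (c :: rC) := cfL_cons _ _
          have eB : cfL (x :: d :: rD) = (x:ℚ) + 1 / cfL (d :: rD) := cfL_cons _ _
          rw [eA, eB] at hcf
          have h1 : 1 / cfL (c :: rC) < 1 / cfL (d :: rD) := by linarith
          have hposA : (0:ℚ) < cfL (c :: rC) := by
            have h := ((cf_core rC.length c rC le_rfl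
              (fun w hw => hrA w (by simp [hw]))).1 (by
                simp only [List.length_cons] at hoA; omega)).1
            have : (1:ℚ) ≤ (c:ℚ) := by exact_mod_cast hc
            linarith
          exact lt_of_one_div_lt_one_div hposA h1
        have heC : rC.length % 2 = 0 := by
          simp only [List.length_cons] at hoA; omega
        have heD : rD.length % 2 = 0 := by
          simp only [List.length_cons] at hoB; omega
        have hlen' : (c :: rC).length ≤ N := by
          simp only [List.length_cons] at hlen ⊢; omega
        have cross := (IH (c :: rC) (d :: rD) hlen').2 c rC d rD rfl rfl hrA hrB heC heD hcf'
        have hqx := zp hq0 x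
        simp only [pv_consR, pA, wA, pB, wB]
        nlinarith
      · exfalso
        have : (y:ℚ) + 1 ≤ (x:ℚ) := by exact_mod_cast (by omega : y + 1 ≤ x)
        linarith
    · -- S-claim
      rintro c rC d rD rfl rfl hA hB heC heD hcf
      have hc : (1:ℤ) ≤ c := hA c (by simp)
      have hd : (1:ℤ) ≤ d := hB d (by simp)
      have hrC : ∀ w ∈ rC, (1:ℤ) ≤ w := fun w hw => hA w (by simp [hw])
      have hrD : ∀ w ∈ rD, (1:ℤ) ≤ w := fun w hw => hB w (by simp [hw])
      obtain ⟨hpA, hwA, hfcA, hfc1A, _, hstrA⟩ :=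
        (pv_core hq0 hqne rC.length c rC le_rfl hrC).1 heC hc
      obtain ⟨hpB, hwB, hfcB, hfc1B, _, _⟩ :=
        (pv_core hq0 hqne rD.length d rD le_rfl hrD).1 heD hd
      set pA := (pv q false (c :: rC)).1
      set wA := (pv q false (c :: rC)).2
      set pB := (pv q false (d :: rD)).1
      set wB := (pv q false (d :: rD)).2
      obtain ⟨hcfA1, hcfA2, hcfA3⟩ :=
        (cf_core rC.length c rC le_rfl hrC).1 heC
      obtain ⟨hcfB1, hcfB2, hcfB3⟩ :=
        (cf_core rD.length d rD le_rfl hrD).1 heD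
      rcases lt_trichotomy d c with hdc | hdc | hdc
      · have hdc' : d + 1 ≤ c := by omega
        have e2 : fF q (d+1) ≤ fF q c := fF_mono hq0 hqne hdc'
        calc pA * wB < pA * (fF q (d+1) * pB) :=
              mul_lt_mul_of_pos_left hfc1B hpA
          _ ≤ pA * (fF q c * pB) :=
              mul_le_mul_of_nonneg_left (mul_le_mul_of_nonneg_right e2 hpB.le) hpA.le
          _ = (fF q c * pA) * pB := by ring
          _ ≤ wA * pB := mul_le_mul_of_nonneg_right hfcA hpB.le
          _ = pB * wA := by ring
      · subst hdc
        -- equal heads : singleton subcases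
        cases rC with
        | nil =>
          exfalso
          have eA : cfL ([d] : List ℤ) = (d:ℚ) := by
            simp [cfL_cons]
          rw [eA] at hcf
          linarith
        | cons x' rC' =>
          cases rD with
          | nil =>
            have hstr := hstrA (by simp)
            have hpB1 : pB = 1 := by simp [pB, pv_consS, pv_nil]
            have hwBf : wB = fF q d := by simp [wB, pv_consS, pv_nil]
            rw [hpB1, hwBf, one_mul]
            linarith
          | cons y' rD' =>
            have hx' : (1:ℤ) ≤ x' := hrC x' (by simp)
            have hy' : (1:ℤ) ≤ y' := hrD y' (by simp)
            have hoC' : rC'.length % 2 = 1 := by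
              simp only [List.length_cons] at heC; omega
            have hoD' : rD'.length % 2 = 1 := by
              simp only [List.length_cons] at heD; omega
            have hrC' : ∀ w ∈ rC', (1:ℤ) ≤ w := fun w hw => hrC w (by simp [hw])
            have hrD' : ∀ w ∈ rD', (1:ℤ) ≤ w := fun w hw => hrD w (by simp [hw])
            have hcf' : cfL (x' :: rC') < cfL (y' :: rD') := by
              have eA : cfL (d :: x' :: rC') = (d:ℚ) + 1 / cfL (x' :: rC') := cfL_cons _ _
              have eB : cfL (d :: y' :: rD') = (d:ℚ) + 1 / cfL (y' :: rD') := cfL_cons _ _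
              rw [eA, eB] at hcf
              have h1 : 1 / cfL (y' :: rD') < 1 / cfL (x' :: rC') := by linarith
              have hposD : (0:ℚ) < cfL (y' :: rD') := by
                obtain ⟨hb, _⟩ := cfR_bounds y' rD' hrD' hoD'
                have : (1:ℚ) ≤ (y':ℚ) := by exact_mod_cast hy'
                linarith
              exact lt_of_one_div_lt_one_div hposD h1
            have hlen' : (x' :: rC').length ≤ N := by
              simp only [List.length_cons] at hlen ⊢; omega
            have cross := (IH (x' :: rC') (y' :: rD') hlen').1 x' rC' y' rD' rfl rfl
              hrC' hrD' hoC' hoD' hcf'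
            have hqc := zp hq0 (-d)
            simp only [pv_consS, pA, wA, pB, wB]
            nlinarith
      · exfalso
        have : (c:ℚ) + 1 ≤ (d:ℚ) := by exact_mod_cast (by omega : c + 1 ≤ d)
        linarith

lemma one_fin_two' : (1 : Matrix (Fin 2) (Fin 2) ℝ) = !![1, 0; 0, 1] := by
  rw [Matrix.one_fin_two]

lemma sig1_det (hq0 : 0 < q) : (sig1 q).det = q⁻¹ := by
  simp [sig1, Matrix.det_fin_two_of]

lemma sig2_det (hq0 : 0 < q) : (sig2 q).det = q⁻¹ := by
  simp [sig2, Matrix.det_fin_two_of]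

lemma sig1_detU (hq0 : 0 < q) : IsUnit (sig1 q).det := by
  rw [sig1_det hq0]
  exact isUnit_iff_ne_zero.mpr (inv_ne_zero (hqne0 hq0))

lemma sig2_detU (hq0 : 0 < q) : IsUnit (sig2 q).det := by
  rw [sig2_det hq0]
  exact isUnit_iff_ne_zero.mpr (inv_ne_zero (hqne0 hq0))

lemma sig1_inv (hq0 : 0 < q) : (sig1 q)⁻¹ = !![q, 1; 0, 1] := by
  apply Matrix.inv_eq_right_inv
  rw [sig1, Matrix.mul_fin_two, one_fin_two']
  congr 1 <;> ring_nf <;> field_simp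

lemma sig2_inv (hq0 : 0 < q) : (sig2 q)⁻¹ = !![1, 0; -q, q] := by
  apply Matrix.inv_eq_right_inv
  rw [sig2, Matrix.mul_fin_two, one_fin_two']
  congr 1 <;> ring_nf <;> field_simp <;> simp

lemma sig1_zpow (hq0 : 0 < q) (hqne : q ≠ 1) :
    ∀ z : ℤ, sig1 q ^ z = !![q ^ (-z), eE q (-z); 0, 1] := by
  intro z
  induction z using Int.induction_on with
  | zero => simp [one_fin_two', eE_zero]
  | succ n ihn =>
    have h1 : q ^ (-((n:ℤ) + 1)) = q ^ (-(n:ℤ)) * q⁻¹ := by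
      rw [show -((n:ℤ) + 1) = -(n:ℤ) - 1 by ring, zpow_sub_one₀ (hqne0 hq0)]
    have h2 : eE q (-((n:ℤ) + 1)) = eE q (-(n:ℤ)) - q ^ (-((n:ℤ) + 1)) := by
      have h := eE_step hq0 hqne (-((n:ℤ) + 1))
      rw [show -((n:ℤ) + 1) + 1 = -(n:ℤ) by ring] at h
      linarith
    rw [Matrix.zpow_add_one (sig1_detU hq0), ihn, sig1]
    set A1 := q ^ (-((n:ℤ) + 1)) with hA1
    set A0 := q ^ (-(n:ℤ)) with hA0
    set E1 := eE q (-((n:ℤ) + 1)) with hE1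
    set E0 := eE q (-(n:ℤ)) with hE0
    set iq := q⁻¹ with hiq
    ext i j
    fin_cases i <;> fin_cases j <;> simp <;> linarith [h1, h2]
  | pred n ihn =>
    have h1 : q ^ (-(-(n:ℤ) - 1)) = q ^ (-(-(n:ℤ))) * q := by
      rw [show -(-(n:ℤ) - 1) = -(-(n:ℤ)) + 1 by ring, zpow_add_one₀ (hqne0 hq0)]
    have h2 : eE q (-(-(n:ℤ) - 1)) = eE q (-(-(n:ℤ))) + q ^ (-(-(n:ℤ))) := by
      have h := eE_step hq0 hqne (-(-(n:ℤ)))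
      rw [show -(-(n:ℤ)) + 1 = -(-(n:ℤ) - 1) by ring] at h
      linarith
    rw [Matrix.zpow_sub_one (sig1_detU hq0), ihn, sig1_inv hq0]
    set A1 := q ^ (-(-(n:ℤ) - 1)) with hA1
    set A0 := q ^ (-(-(n:ℤ))) with hA0
    set E1 := eE q (-(-(n:ℤ) - 1)) with hE1
    set E0 := eE q (-(-(n:ℤ))) with hE0
    ext i j
    fin_cases i <;> fin_cases j <;> simp <;> linarith [h1, h2]

lemma sig2_zpow (hq0 : 0 < q) (hqne : q ≠ 1) :
    ∀ z : ℤ, sig2 q ^ z = !![1, 0; fF q z, q ^ (-z)] := by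
  intro z
  induction z using Int.induction_on with
  | zero => simp [one_fin_two', fF_zero]
  | succ n ihn =>
    have h1 : q ^ (-((n:ℤ) + 1)) = q ^ (-(n:ℤ)) * q⁻¹ := by
      rw [show -((n:ℤ) + 1) = -(n:ℤ) - 1 by ring, zpow_sub_one₀ (hqne0 hq0)]
    have h2 : fF q ((n:ℤ) + 1) = fF q (n:ℤ) + q ^ (-(n:ℤ)) := fF_step hq0 hqne _
    rw [Matrix.zpow_add_one (sig2_detU hq0), ihn, sig2]
    set A1 := q ^ (-((n:ℤ) + 1)) with hA1
    set A0 := q ^ (-(n:ℤ)) with hA0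
    set F1 := fF q ((n:ℤ) + 1) with hF1
    set F0 := fF q (n:ℤ) with hF0
    set iq := q⁻¹ with hiq
    ext i j
    fin_cases i <;> fin_cases j <;> simp <;> linarith [h1, h2]
  | pred n ihn =>
    have h1 : q ^ (-(-(n:ℤ) - 1)) = q ^ (-(-(n:ℤ))) * q := by
      rw [show -(-(n:ℤ) - 1) = -(-(n:ℤ)) + 1 by ring, zpow_add_one₀ (hqne0 hq0)]
    have h2 : fF q (-(n:ℤ) - 1) = fF q (-(n:ℤ)) - q ^ (-(-(n:ℤ) - 1)) := by
      have h := fF_step hq0 hqne (-(n:ℤ) - 1)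
      rw [show -(n:ℤ) - 1 + 1 = -(n:ℤ) by ring] at h
      have h' : q ^ (-(-(n:ℤ) - 1)) = q ^ (-((n:ℤ) * -1 - 1) : ℤ) := by norm_num
      rw [h]
      ring_nf
    rw [Matrix.zpow_sub_one (sig2_detU hq0), ihn, sig2_inv hq0]
    set A1 := q ^ (-(-(n:ℤ) - 1)) with hA1
    set A0 := q ^ (-(-(n:ℤ))) with hA0
    set F1 := fF q (-(n:ℤ) - 1) with hF1
    set F0 := fF q (-(n:ℤ)) with hF0
    ext i j
    fin_cases i <;> fin_cases j <;> simp <;> nlinarith [h1, h2]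

/-- parity-alternating product of generator powers. -/
noncomputable def mP (q : ℝ) : Bool → List ℤ → Matrix (Fin 2) (Fin 2) ℝ
  | _, [] => 1
  | true, x :: r => sig1 q ^ (-x) * mP q false r
  | false, c :: r => sig2 q ^ c * mP q true r

@[simp] lemma mP_nil (b : Bool) : mP q b [] = 1 := by cases b <;> rfl
lemma mP_consR (x : ℤ) (r : List ℤ) : mP q true (x :: r) = sig1 q ^ (-x) * mP q false r := rfl
lemma mP_consS (c : ℤ) (r : List ℤ) : mP q false (c :: r) = sig2 q ^ c * mP q true r := rfl

noncomputable def blk (q : ℝ) (b : Bool) (z : ℤ) : Matrix (Fin 2) (Fin 2) ℝ :=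
  if b then sig1 q ^ (-z) else sig2 q ^ z

lemma mP_cons (b : Bool) (w : ℤ) (r : List ℤ) :
    mP q b (w :: r) = blk q b w * mP q (!b) r := by
  cases b
  · exact mP_consS w r
  · exact mP_consR w r

lemma mP_snoc : ∀ (l : List ℤ) (b : Bool) (z : ℤ),
    mP q b (l ++ [z]) = mP q b l * blk q (if l.length % 2 = 0 then b else !b) z := by
  intro l
  induction l with
  | nil =>
    intro b z
    simp [mP_cons]
  | cons w l IHl =>
    intro b z
    have hpar : (if l.length % 2 = 0 then !b else !(!b))
        = (if (w :: l).length % 2 = 0 then b else !b) := by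
      by_cases h : l.length % 2 = 0
      · have h' : ¬((l.length + 1) % 2 = 0) := by omega
        simp [List.length_cons, h, h']
      · have h' : (l.length + 1) % 2 = 0 := by omega
        simp [List.length_cons, h, h']
    rw [List.cons_append, mP_cons, IHl (!b) z, ← mul_assoc, ← mP_cons, hpar]

/-- digit list of `a` on indices 1..k -/
def digs (a : ℕ → ℤ) (k : ℕ) : List ℤ := (List.range k).map fun i => a (i + 1)

@[simp] lemma digs_zero (a : ℕ → ℤ) : digs a 0 = [] := rfl

lemma digs_succ (a : ℕ → ℤ) (k : ℕ) : digs a (k + 1) = digs a k ++ [a (k + 1)] := by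
  simp [digs, List.range_succ]

lemma digs_length (a : ℕ → ℤ) (k : ℕ) : (digs a k).length = k := by simp [digs]

lemma betaMat_eq_mP (a : ℕ → ℤ) : ∀ k, betaMat q a k = mP q true (digs a k) := by
  intro k
  induction k with
  | zero => rfl
  | succ k IH =>
    have hstep : betaMat q a (k + 1) = betaMat q a k *
        (if (k + 1) % 2 = 1 then sig1 q ^ (-(a (k + 1))) else sig2 q ^ (a (k + 1))) := rfl
    rw [hstep, IH, digs_succ, mP_snoc, digs_length, blk]
    by_cases h : k % 2 = 0
    · have : (k + 1) % 2 = 1 := by omega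
      simp [h, this]
    · have : ¬((k + 1) % 2 = 1) := by omega
      simp [h, this]

lemma pv_eq_mP (hq0 : 0 < q) (hqne : q ≠ 1) :
    ∀ (l : List ℤ) (b : Bool),
      (pv q b l).1 = mP q b l 0 0 ∧ (pv q b l).2 = mP q b l 1 0
  | [], b => by cases b <;> simp [one_fin_two']
  | x :: r, true => by
    obtain ⟨h1, h2⟩ := pv_eq_mP hq0 hqne r false
    rw [pv_consR, mP_consR, sig1_zpow hq0 hqne, neg_neg]
    constructor <;>
      simp [Matrix.mul_apply, Fin.sum_univ_two, h1, h2]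
  | c :: r, false => by
    obtain ⟨h1, h2⟩ := pv_eq_mP hq0 hqne r true
    rw [pv_consS, mP_consS, sig2_zpow hq0 hqne]
    constructor <;>
      simp [Matrix.mul_apply, Fin.sum_univ_two, h1, h2]

lemma sharpVal_eq_pv (hq0 : 0 < q) (hqne : q ≠ 1) (n : ℕ) (a : ℕ → ℤ) :
    sharpVal q n a = (pv q true (digs a (2 * n))).1 / (pv q true (digs a (2 * n))).2 := by
  obtain ⟨h1, h2⟩ := pv_eq_mP hq0 hqne (digs a (2 * n)) true
  rw [sharpVal, mobiusInf, betaMat_eq_mP, h1, h2]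

lemma cfL_singleton (z : ℤ) : cfL [z] = (z : ℚ) := by
  rw [cfL_cons, cfL_nil, div_zero, add_zero]

lemma cfVal_eq_cfL (a : ℕ → ℤ) : ∀ (j i : ℕ),
    cfVal a (i + j) i = cfL ((List.range (j + 1)).map fun t => a (i + t)) := by
  intro j
  induction j with
  | zero =>
    intro i
    rw [cfVal]
    simp [List.range_succ, cfL_singleton]
  | succ j IH =>
    intro i
    have hlt : ¬(i + (j + 1) ≤ i) := by omega
    rw [cfVal, if_neg hlt]
    have h1 : cfVal a (i + (j + 1)) (i + 1) = cfL ((List.range (j + 1)).map fun t => a (i + 1 + t)) := by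
      have := IH (i + 1)
      rw [show i + 1 + j = i + (j + 1) by omega] at this
      exact this
    rw [h1]
    have h2 : (List.range (j + 1 + 1)).map (fun t => a (i + t))
        = a i :: ((List.range (j + 1)).map fun t => a (i + 1 + t)) := by
      rw [List.range_succ_eq_map]
      simp only [List.map_cons, List.map_map, Nat.add_zero]
      have hfun : ((fun t => a (i + t)) ∘ Nat.succ) = fun t => a (i + 1 + t) := by
        funext t
        simp only [Function.comp_apply]
        exact congrArg a (by omega)
      rw [hfun]
    rw [h2, cfL_cons]

lemma digs_eq_getD : ∀ (l : List ℤ), (List.range l.length).map (fun i => l.getD i 1) = l := by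
  intro l
  induction l with
  | nil => simp
  | cons z r IH =>
    rw [List.length_cons, List.range_succ_eq_map]
    simp only [List.map_cons, List.map_map, List.getD_cons_zero]
    have hfun : ((fun i => (z :: r).getD i 1) ∘ Nat.succ) = fun i => r.getD i 1 := by
      funext i; rfl
    rw [hfun, IH]

/-- even-length and odd-length positive continued fraction lists exist for x > 1. -/
lemma exE : ∀ (d : ℕ) (x : ℚ), x.den = d → 1 < x →
    ∃ le lo : List ℤ, (∀ z ∈ le, (1:ℤ) ≤ z) ∧ le.length % 2 = 0 ∧ le ≠ [] ∧ cfL le = x ∧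
      (∀ z ∈ lo, (1:ℤ) ≤ z) ∧ lo.length % 2 = 1 ∧ cfL lo = x := by
  intro d
  induction d using Nat.strong_induction_on with
  | _ d IH =>
    intro x hden hx1
    by_cases hint : x.den = 1
    · -- x is an integer ≥ 2
      have hxz : x = (x.num : ℚ) := by
        conv_lhs => rw [← Rat.num_div_den x]
        rw [hint]; simp
      have hn2 : 2 ≤ x.num := by
        have : (1:ℚ) < (x.num : ℚ) := by rw [← hxz]; exact hx1
        exact_mod_cast this
      refine ⟨[x.num - 1, 1], [x.num], ?_, by simp, by simp, ?_, ?_, by simp, ?_⟩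
      · intro z hz; simp at hz; rcases hz with rfl | rfl <;> omega
      · rw [cfL_cons, cfL_singleton]
        push_cast
        rw [hxz]; norm_num
      · intro z hz; simp at hz; subst hz; omega
      · rw [cfL_singleton, ← hxz]
    · -- x has a fractional part
      have hfl : (1:ℤ) ≤ ⌊x⌋ := by
        rw [Int.le_floor]; exact_mod_cast hx1.le
      set f : ℚ := x - ⌊x⌋ with hfdef
      have hne : ((⌊x⌋ : ℚ)) ≠ x := by
        intro h; apply hint; rw [← h]; exact Rat.den_intCast _
      have hf0 : 0 < f := by
        rcases eq_or_lt_of_le (Int.floor_le x) with h | h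
        · exact absurd h hne
        · rw [hfdef]; linarith
      have hf1 : f < 1 := by
        have := Int.lt_floor_add_one x
        rw [hfdef]; linarith
      have hfden : f.den ≤ x.den := by
        have h := Rat.add_den_dvd x ((-⌊x⌋ : ℤ) : ℚ)
        rw [Rat.den_intCast, mul_one] at h
        have he : f = x + ((-⌊x⌋ : ℤ) : ℚ) := by rw [hfdef]; push_cast; ring
        rw [he]
        exact Nat.le_of_dvd x.pos h
      set y : ℚ := f⁻¹ with hydef
      have hy1 : 1 < y := one_lt_inv_iff₀.mpr ⟨hf0, hf1⟩
      have hyden : (y.den : ℤ) ∣ f.num := by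
        have hh : y = Rat.divInt (f.den : ℤ) f.num := Rat.inv_def f
        rw [hh]
        exact Rat.den_dvd _ _
      have hnum_pos : 0 < f.num := Rat.num_pos.mpr hf0
      have hnum_lt : f.num < (f.den : ℤ) := by
        have hdpos : (0:ℚ) < (f.den : ℚ) := by exact_mod_cast f.pos
        have h2 : (f.num : ℚ) / (f.den : ℚ) < 1 := by
          rw [Rat.num_div_den f]; exact hf1
        have h3 : (f.num : ℚ) < (f.den : ℚ) := (div_lt_one hdpos).mp h2
        exact_mod_cast h3
      have hydlt : y.den < d := by
        have h1 : (y.den : ℤ) ≤ f.num := Int.le_of_dvd hnum_pos hyden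
        have h2 : (y.den : ℤ) < (f.den : ℤ) := lt_of_le_of_lt h1 hnum_lt
        have h3 : y.den < f.den := by exact_mod_cast h2
        omega
      obtain ⟨le', lo', hle'1, hle'2, hle'3, hle'4, hlo'1, hlo'2, hlo'3⟩ :=
        IH y.den hydlt y rfl hy1
      have hinv : 1 / y = f := by
        rw [hydef, one_div, inv_inv]
      refine ⟨⌊x⌋ :: lo', ⌊x⌋ :: le', ?_, by rw [List.length_cons]; omega, by simp, ?_, ?_, ?_, ?_⟩
      · intro z hz; simp at hz
        rcases hz with rfl | hz
        · exact hfl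
        · exact hlo'1 z hz
      · rw [cfL_cons, hlo'3, hinv, hfdef]; ring
      · intro z hz; simp at hz
        rcases hz with rfl | hz
        · exact hfl
        · exact hle'1 z hz
      · rw [List.length_cons]; omega
      · rw [cfL_cons, hle'4, hinv, hfdef]; ring

/-- every positive rational has an even-length expansion list with head ≥ 0, tail ≥ 1. -/
lemma exPos (x : ℚ) (hx : 0 < x) :
    ∃ (x0 : ℤ) (r : List ℤ), 0 ≤ x0 ∧ (∀ z ∈ r, (1:ℤ) ≤ z) ∧ r.length % 2 = 1 ∧
      cfL (x0 :: r) = x := by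
  rcases lt_trichotomy 1 x with h1 | h1 | h1
  · obtain ⟨le, lo, hle1, hle2, hle3, hle4, _, _, _⟩ := exE x.den x rfl h1
    cases le with
    | nil => exact absurd rfl hle3
    | cons z r =>
      refine ⟨z, r, ?_, fun w hw => hle1 w (by simp [hw]), ?_, hle4⟩
      · have := hle1 z (by simp); omega
      · rw [List.length_cons] at hle2; omega
  · refine ⟨0, [1], le_refl _, ?_, by simp, ?_⟩
    · intro z hz; simp at hz; omega
    · rw [cfL_cons, cfL_singleton]
      rw [← h1]; norm_num
  · -- 0 < x < 1
    have hy1 : 1 < x⁻¹ := one_lt_inv_iff₀.mpr ⟨hx, h1⟩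
    obtain ⟨le, lo, _, _, _, _, hlo1, hlo2, hlo3⟩ := exE x⁻¹.den x⁻¹ rfl hy1
    refine ⟨0, lo, le_refl _, hlo1, hlo2, ?_⟩
    rw [cfL_cons, hlo3]
    simp

lemma cfVal_digs (a : ℕ → ℤ) {n : ℕ} (hn : 1 ≤ n) :
    cfVal a (2 * n) 1 = cfL (digs a (2 * n)) := by
  have h := cfVal_eq_cfL a (2 * n - 1) 1
  rw [show 1 + (2 * n - 1) = 2 * n by omega] at h
  rw [h]
  congr 1
  unfold digs
  rw [show 2 * n - 1 + 1 = 2 * n by omega]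
  apply List.map_congr_left
  intro t _
  exact congrArg a (by omega)

lemma digs_getD (l : List ℤ) : digs (fun i => l.getD (i - 1) 1) l.length = l := by
  unfold digs
  have hfun : (fun i => l.getD (i + 1 - 1) 1) = fun i => l.getD i 1 := by
    funext i; simp
  rw [show ((List.range l.length).map fun i => l.getD (i + 1 - 1) 1)
      = (List.range l.length).map fun i => l.getD i 1 by rw [hfun]]
  exact digs_eq_getD l

lemma digs_cons_form (a : ℕ → ℤ) (m : ℕ) :
    digs a (m + 1) = a 1 :: (List.range m).map fun i => a (i + 2) := by
  unfold digs
  rw [List.range_succ_eq_map]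
  simp only [List.map_cons, List.map_map, Nat.zero_add]
  have hfun : ((fun i => a (i + 1)) ∘ Nat.succ) = fun i => a (i + 2) := by
    funext i
    show a (Nat.succ i + 1) = a (i + 2)
    exact congrArg a (by omega)
  rw [hfun]

/-- shape classification of an expansion. -/
lemma shape {n : ℕ} {a : ℕ → ℤ} {x : ℚ} (h : IsECFExp n a x) :
    (x = 0 ∧ digs a (2 * n) = [-1, 1]) ∨
    (0 < x ∧ ∃ x0 r, digs a (2 * n) = x0 :: r ∧ 0 ≤ x0 ∧ (∀ z ∈ r, (1:ℤ) ≤ z) ∧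
      r.length % 2 = 1 ∧ cfL (x0 :: r) = x) ∨
    (x < 0 ∧ ∃ x0 r, digs a (2 * n) = (x0 :: r).map (fun z => -z) ∧ 0 ≤ x0 ∧
      (∀ z ∈ r, (1:ℤ) ≤ z) ∧ r.length % 2 = 1 ∧ cfL (x0 :: r) = -x) := by
  rcases h with ⟨hne, ⟨hn1, hform⟩, hcf⟩ | ⟨rfl, rfl, h1, h2⟩
  · have hcf' : cfL (digs a (2 * n)) = x := by rw [← cfVal_digs a hn1]; exact hcf
    have hcons : digs a (2 * n) = a 1 :: (List.range (2 * n - 1)).map (fun i => a (i + 2)) := by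
      rw [show 2 * n = (2 * n - 1) + 1 by omega]
      exact digs_cons_form a (2 * n - 1)
    have hlenr : ((List.range (2 * n - 1)).map fun i => a (i + 2)).length % 2 = 1 := by
      simp only [List.length_map, List.length_range]
      omega
    rcases hform with ⟨hpos0, hpos⟩ | ⟨hneg0, hneg⟩
    · -- positive form
      right; left
      have hrmem : ∀ z ∈ (List.range (2 * n - 1)).map fun i => a (i + 2), (1:ℤ) ≤ z := by
        intro z hz
        obtain ⟨i, hi, rfl⟩ := List.mem_map.mp hz
        have hi' := List.mem_range.mp hi
        exact hpos (i + 2) (by omega) (by omega)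
      have hx0 : (0:ℚ) < x := by
        rw [← hcf', hcons]
        obtain ⟨hb, _⟩ := cfR_bounds (a 1) _ hrmem hlenr
        have : (0:ℚ) ≤ (a 1 : ℚ) := by exact_mod_cast hpos0
        linarith
      exact ⟨hx0, a 1, _, hcons, hpos0, hrmem, hlenr, by rw [← hcons, hcf']⟩
    · -- negative form
      right; right
      set x0 : ℤ := -(a 1) with hx0def
      set r : List ℤ := (List.range (2 * n - 1)).map fun i => -(a (i + 2)) with hrdef
      have hmap : digs a (2 * n) = (x0 :: r).map (fun z => -z) := by
        rw [hcons]
        simp only [List.map_cons, hx0def, neg_neg, hrdef, List.map_map]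
        congr 1
        apply List.map_congr_left
        intro t _
        simp
      have hrmem : ∀ z ∈ r, (1:ℤ) ≤ z := by
        intro z hz
        rw [hrdef] at hz
        obtain ⟨i, hi, rfl⟩ := List.mem_map.mp hz
        have hi' := List.mem_range.mp hi
        have := hneg (i + 2) (by omega) (by omega)
        omega
      have hrlen : r.length % 2 = 1 := by
        rw [hrdef]
        simp only [List.length_map, List.length_range]
        omega
      have hcfneg : cfL (x0 :: r) = -x := by
        have := cfL_neg (x0 :: r)
        rw [← hmap, hcf'] at this
        linarith
      have hxneg : x < 0 := by
        obtain ⟨hb, _⟩ := cfR_bounds x0 r hrmem hrlen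
        have h0 : (0:ℚ) ≤ (x0 : ℚ) := by exact_mod_cast (by omega : (0:ℤ) ≤ x0)
        have : (0:ℚ) < -x := by rw [← hcfneg]; linarith
        linarith
      exact ⟨hxneg, x0, r, hmap, by omega, hrmem, hrlen, hcfneg⟩
  · -- zero convention
    left
    refine ⟨rfl, ?_⟩
    have : digs a 2 = [a 1, a 2] := by
      unfold digs
      rw [show (2:ℕ) = 1 + 1 by rfl, List.range_succ, List.range_succ]
      simp
    rw [show 2 * 1 = 2 by rfl, this, h1, h2]


/-- every rational has an expansion. -/
lemma exists_exp (x : ℚ) : ∃ (n : ℕ) (a : ℕ → ℤ), IsECFExp n a x := by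
  have hbuild : ∀ (l : List ℤ), l ≠ [] → l.length % 2 = 0 →
      ∃ n a, 1 ≤ n ∧ 2 * n = l.length ∧ digs a (2 * n) = l ∧ a 1 = l.getD 0 1 ∧
        (∀ i, 2 ≤ i → i ≤ 2 * n → ∃ hm : i - 2 < l.tail.length, a i = l.tail[i-2]) ∧
        cfVal a (2 * n) 1 = cfL l := by
    intro l hne hev
    obtain ⟨n, hn⟩ : ∃ n, l.length = 2 * n := ⟨l.length / 2, by omega⟩
    have hlen1 : 1 ≤ l.length := by
      cases l with
      | nil => exact absurd rfl hne
      | cons _ _ => simp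
    have hn1 : 1 ≤ n := by omega
    set a : ℕ → ℤ := fun i => l.getD (i - 1) 1 with ha
    have hdigs : digs a (2 * n) = l := by rw [← hn]; exact digs_getD l
    refine ⟨n, a, hn1, hn.symm, hdigs, rfl, ?_, ?_⟩
    · intro i hi2 hiN
      have hm : i - 2 < l.tail.length := by
        rw [List.length_tail]
        omega
      refine ⟨hm, ?_⟩
      cases l with
      | nil => exact absurd rfl hne
      | cons z r =>
        show (z :: r).getD (i - 1) 1 = _
        rw [show i - 1 = (i - 2) + 1 by omega]
        rw [List.getD_cons_succ]
        simp only [List.tail_cons]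
        exact List.getD_eq_getElem r 1 (by simpa using hm)
    · rw [cfVal_digs a hn1, hdigs]
  rcases lt_trichotomy x 0 with hx | hx | hx
  · -- negative
    obtain ⟨x0, r, h0, h1, h2, h3⟩ := exPos (-x) (by linarith)
    set l : List ℤ := (x0 :: r).map (fun z => -z) with hl
    have hlne : l ≠ [] := by simp [hl]
    have hlev : l.length % 2 = 0 := by
      simp only [hl, List.length_map, List.length_cons]
      omega
    obtain ⟨n, a, hn1, hn2, hdigs, ha1, hai, hacf⟩ := hbuild l hlne hlev
    refine ⟨n, a, Or.inl ⟨hx.ne, ⟨hn1, Or.inr ⟨?_, ?_⟩⟩, ?_⟩⟩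
    · rw [ha1, hl]
      simp only [List.map_cons, List.getD_cons_zero]
      omega
    · intro i hi2 hiN
      obtain ⟨hm, hai'⟩ := hai i hi2 hiN
      have hmem : a i ∈ l.tail := by rw [hai']; exact List.getElem_mem hm
      have htl : l.tail = r.map (fun z => -z) := by simp [hl]
      rw [htl] at hmem
      obtain ⟨w, hw, hw2⟩ := List.mem_map.mp hmem
      have := h1 w hw
      omega
    · rw [hacf, hl, cfL_neg, h3]
      ring
  · -- zero
    refine ⟨1, fun i => if i = 1 then -1 else 1, Or.inr ⟨hx, rfl, by simp, by simp⟩⟩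
  · -- positive
    obtain ⟨x0, r, h0, h1, h2, h3⟩ := exPos x hx
    set l : List ℤ := x0 :: r with hl
    have hlne : l ≠ [] := by simp [hl]
    have hlev : l.length % 2 = 0 := by
      simp only [hl, List.length_cons]
      omega
    obtain ⟨n, a, hn1, hn2, hdigs, ha1, hai, hacf⟩ := hbuild l hlne hlev
    refine ⟨n, a, Or.inl ⟨hx.ne', ⟨hn1, Or.inl ⟨?_, ?_⟩⟩, ?_⟩⟩
    · rw [ha1, hl, List.getD_cons_zero]
      exact h0
    · intro i hi2 hiN
      obtain ⟨hm, hai'⟩ := hai i hi2 hiN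
      have hmem : a i ∈ l.tail := by rw [hai']; exact List.getElem_mem hm
      have htl : l.tail = r := by simp [hl]
      rw [htl] at hmem
      exact h1 _ hmem
    · rw [hacf, hl, h3]

lemma pv_zero_list (hq0 : 0 < q) (hqne : q ≠ 1) :
    (pv q true ([-1, 1] : List ℤ)).1 = 0 ∧ (pv q true ([-1, 1] : List ℤ)).2 = 1 := by
  have h1 : pv q false [1] = ((1:ℝ), fF q 1 * 1 + q ^ (-(1:ℤ)) * 0) := by
    rw [pv_consS, pv_nil]
  have hm1 : q ^ (-1:ℤ) = q⁻¹ := by rw [_root_.zpow_neg, zpow_one]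
  constructor
  · rw [pv_consR, h1]
    simp only [mul_zero, add_zero, mul_one]
    rw [fF_one hq0 hqne, eE_neg_one hq0 hqne, hm1]
    ring
  · rw [pv_consR, h1]
    simp only [mul_zero, add_zero, mul_one]
    rw [fF_one hq0 hqne]

lemma master (hq0 : 0 < q) (hqne : q ≠ 1) {n m : ℕ} {a b : ℕ → ℤ} {x y : ℚ}
    (ha : IsECFExp n a x) (hb : IsECFExp m b y) (hxy : x < y) :
    sharpVal q n a < sharpVal q m b := by
  have hq0' : 0 < q⁻¹ := inv_pos.mpr hq0
  have hqne' : q⁻¹ ≠ 1 := by simpa [inv_eq_one] using hqne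
  rw [sharpVal_eq_pv hq0 hqne, sharpVal_eq_pv hq0 hqne]
  have hval : ∀ P W : ℝ, P / (-q * W) = -(P / W / q) := by
    intro P W
    rw [show -q * W = -(q * W) by ring, div_neg, div_div, mul_comm]
  rcases shape ha with ⟨hx0, hda⟩ | ⟨hx0, x0, rA, hda, hA0, hA1, hA2, hA3⟩ |
    ⟨hx0, x0, rA, hda, hA0, hA1, hA2, hA3⟩ <;>
    rcases shape hb with ⟨hy0, hdb⟩ | ⟨hy0, y0, rB, hdb, hB0, hB1, hB2, hB3⟩ |
      ⟨hy0, y0, rB, hdb, hB0, hB1, hB2, hB3⟩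
  · exact absurd hxy (by rw [hx0, hy0]; exact lt_irrefl 0)
  · -- zero vs positive
    rw [hda, hdb]
    obtain ⟨hz1, hz2⟩ := pv_zero_list hq0 hqne
    rw [hz1, hz2]
    obtain ⟨hw, _, _, hp⟩ := (pv_core hq0 hqne rB.length y0 rB le_rfl hB1).2 hB2
    simp only [div_one, zero_div]
    exact div_pos (hp hB0) hw
  · exact absurd hxy (by rw [hx0]; linarith)
  · exact absurd hxy (by rw [hy0]; linarith)
  · -- positive vs positive
    rw [hda, hdb]
    obtain ⟨hwA, _, _, hpA⟩ := (pv_core hq0 hqne rA.length x0 rA le_rfl hA1).2 hA2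
    obtain ⟨hwB, _, _, hpB⟩ := (pv_core hq0 hqne rB.length y0 rB le_rfl hB1).2 hB2
    have hcf : cfL (x0 :: rA) < cfL (y0 :: rB) := by rw [hA3, hB3]; exact_mod_cast hxy
    have cross := (mono_core hq0 hqne (x0 :: rA).length (x0 :: rA) (y0 :: rB) le_rfl).1
      x0 rA y0 rB rfl rfl hA1 hB1 hA2 hB2 hcf
    exact (div_lt_div_iff₀ hwA hwB).mpr cross
  · exact absurd hxy (by linarith)
  · -- negative vs zero
    rw [hda, hdb]
    obtain ⟨hz1, hz2⟩ := pv_zero_list hq0 hqne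
    rw [hz1, hz2]
    have hv := pv_neg hq0 hqne (x0 :: rA) true
    rw [hv]
    obtain ⟨hwA, _, _, hpA⟩ := (pv_core hq0' hqne' rA.length x0 rA le_rfl hA1).2 hA2
    simp only [div_one, zero_div]
    exact div_neg_of_pos_of_neg (hpA hA0) (by nlinarith)
  · -- negative vs positive
    rw [hda, hdb]
    have hv := pv_neg hq0 hqne (x0 :: rA) true
    rw [hv]
    obtain ⟨hwA, _, _, hpA⟩ := (pv_core hq0' hqne' rA.length x0 rA le_rfl hA1).2 hA2
    obtain ⟨hwB, _, _, hpB⟩ := (pv_core hq0 hqne rB.length y0 rB le_rfl hB1).2 hB2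
    have hneg : (pv q⁻¹ true (x0 :: rA)).1 / (-q * (pv q⁻¹ true (x0 :: rA)).2) < 0 :=
      div_neg_of_pos_of_neg (hpA hA0) (by nlinarith)
    have hpos : 0 < (pv q true (y0 :: rB)).1 / (pv q true (y0 :: rB)).2 :=
      div_pos (hpB hB0) hwB
    linarith
  · -- negative vs negative
    rw [hda, hdb]
    have hvA := pv_neg hq0 hqne (x0 :: rA) true
    have hvB := pv_neg hq0 hqne (y0 :: rB) true
    rw [hvA, hvB]
    obtain ⟨hwA, _, _, hpA⟩ := (pv_core hq0' hqne' rA.length x0 rA le_rfl hA1).2 hA2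
    obtain ⟨hwB, _, _, hpB⟩ := (pv_core hq0' hqne' rB.length y0 rB le_rfl hB1).2 hB2
    have hcf : cfL (y0 :: rB) < cfL (x0 :: rA) := by
      rw [hA3, hB3]
      have : (-y : ℚ) < -x := by linarith
      exact_mod_cast this
    have cross := (mono_core hq0' hqne' (y0 :: rB).length (y0 :: rB) (x0 :: rA) le_rfl).1
      y0 rB x0 rA rfl rfl hB1 hA1 hB2 hA2 hcf
    have hdiv : (pv q⁻¹ true (y0 :: rB)).1 / (pv q⁻¹ true (y0 :: rB)).2
        < (pv q⁻¹ true (x0 :: rA)).1 / (pv q⁻¹ true (x0 :: rA)).2 :=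
      (div_lt_div_iff₀ hwB hwA).mpr cross
    rw [hval, hval]
    have h2 : (pv q⁻¹ true (y0 :: rB)).1 / (pv q⁻¹ true (y0 :: rB)).2 * q⁻¹
        < (pv q⁻¹ true (x0 :: rA)).1 / (pv q⁻¹ true (x0 :: rA)).2 * q⁻¹ :=
      mul_lt_mul_of_pos_right hdiv hq0'
    rw [div_eq_mul_inv _ q, div_eq_mul_inv _ q]
    linarith

lemma below_seq (t : ℝ) : ∃ u : ℕ → ℚ,
    Tendsto (fun m => (u m : ℝ)) atTop (nhds t) ∧ ∀ m : ℕ, 1 ≤ m → (u m : ℝ) ≤ t := by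
  refine ⟨fun m => (⌊(m:ℝ) * t⌋ : ℚ) / (m : ℚ), ?_, ?_⟩
  · have hcast : ∀ m : ℕ, ((((⌊(m:ℝ) * t⌋ : ℚ) / (m : ℚ)) : ℚ) : ℝ)
        = ((⌊(m:ℝ) * t⌋ : ℤ) : ℝ) / (m : ℝ) := by
      intro m; push_cast; ring
    have hlow : Tendsto (fun m : ℕ => t - 1 / (m:ℝ)) atTop (nhds t) := by
      have h0 : Tendsto (fun m : ℕ => 1 / (m:ℝ)) atTop (nhds 0) :=
        tendsto_one_div_atTop_nhds_zero_nat
      have h := h0.const_sub t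
      simpa using h
    apply tendsto_of_tendsto_of_tendsto_of_le_of_le' hlow tendsto_const_nhds
    · refine eventually_atTop.mpr ⟨1, fun m hm => ?_⟩
      have hmpos : (0:ℝ) < m := by exact_mod_cast hm
      rw [hcast, le_div_iff₀ hmpos]
      have hfl := Int.sub_one_lt_floor ((m:ℝ) * t)
      have hinv : (1 / (m:ℝ)) * m = 1 := by field_simp
      nlinarith [hfl, hinv]
    · refine eventually_atTop.mpr ⟨1, fun m hm => ?_⟩
      have hmpos : (0:ℝ) < m := by exact_mod_cast hm
      rw [hcast, div_le_iff₀ hmpos]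
      have hfl := Int.floor_le ((m:ℝ) * t)
      nlinarith
  · intro m hm
    have hmpos : (0:ℝ) < m := by exact_mod_cast hm
    have hcast : ((((⌊(m:ℝ) * t⌋ : ℚ) / (m : ℚ)) : ℚ) : ℝ)
        = ((⌊(m:ℝ) * t⌋ : ℤ) : ℝ) / (m : ℝ) := by push_cast; ring
    rw [hcast, div_le_iff₀ hmpos]
    have hfl := Int.floor_le ((m:ℝ) * t)
    nlinarith

lemma above_seq (t : ℝ) : ∃ u : ℕ → ℚ,
    Tendsto (fun m => (u m : ℝ)) atTop (nhds t) ∧ ∀ m : ℕ, 1 ≤ m → t ≤ (u m : ℝ) := by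
  obtain ⟨u, hconv, hle⟩ := below_seq (-t)
  refine ⟨fun m => -(u m), ?_, ?_⟩
  · have h := hconv.neg
    simp only [neg_neg] at h
    have : (fun m => ((-(u m) : ℚ) : ℝ)) = fun m => -((u m : ℚ) : ℝ) := by
      funext m; push_cast; ring
    rw [this]
    exact h
  · intro m hm
    have := hle m hm
    have hc : ((-(u m) : ℚ) : ℝ) = -((u m : ℚ) : ℝ) := by push_cast; ring
    rw [hc]
    linarith

end QAux

/-- strict monotonicity of q-deformed irrationals: for 0 < q < 1 and
irrational reals t < t′ with q-deformations L = [t]_q, L′ = [t′]_q, one has L < L′;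
in particular t ↦ [t]_q is injective on irrationals. -/
theorem qdeform_irrational_strictMono (q : ℝ) (hq0 : 0 < q) (hq1 : q < 1)
    (t t' L L' : ℝ) (ht : Irrational t) (ht' : Irrational t') (htt : t < t')
    (hL : IsQIrrDef q t L) (hL' : IsQIrrDef q t' L') :
    L < L' := by
  have hqne : q ≠ 1 := ne_of_lt hq1
  obtain ⟨r, hr1, hr2⟩ := exists_rat_btwn htt
  obtain ⟨s, hs1, hs2⟩ := exists_rat_btwn hr2
  have hrs : r < s := by exact_mod_cast hs1
  obtain ⟨u, huconv, hule⟩ := QAux.below_seq t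
  obtain ⟨v, hvconv, hvge⟩ := QAux.above_seq t'
  have hex : ∀ w : ℚ, ∃ p : ℕ × (ℕ → ℤ), IsECFExp p.1 p.2 w := by
    intro w
    obtain ⟨n, a, h⟩ := QAux.exists_exp w
    exact ⟨⟨n, a⟩, h⟩
  let E : ℚ → ℕ × (ℕ → ℤ) := fun w => Classical.choose (hex w)
  have hE : ∀ w, IsECFExp (E w).1 (E w).2 w := fun w => Classical.choose_spec (hex w)
  have hTx : Tendsto (fun m => sharpVal q (E (u m)).1 (E (u m)).2) atTop (nhds L) :=
    hL u (fun m => (E (u m)).1) (fun m => (E (u m)).2) huconv (fun m => hE (u m))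
  have hTy : Tendsto (fun m => sharpVal q (E (v m)).1 (E (v m)).2) atTop (nhds L') :=
    hL' v (fun m => (E (v m)).1) (fun m => (E (v m)).2) hvconv (fun m => hE (v m))
  set Sr := sharpVal q (E r).1 (E r).2 with hSr
  set Ss := sharpVal q (E s).1 (E s).2 with hSs
  have hLr : L ≤ Sr := by
    apply le_of_tendsto hTx
    refine eventually_atTop.mpr ⟨1, fun m hm => ?_⟩
    have hlt : u m < r := by
      have h1 := hule m hm
      have : ((u m : ℚ) : ℝ) < (r : ℝ) := lt_of_le_of_lt h1 hr1
      exact_mod_cast this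
    exact le_of_lt (QAux.master hq0 hqne (hE (u m)) (hE r) hlt)
  have hrsS : Sr < Ss := QAux.master hq0 hqne (hE r) (hE s) hrs
  have hsL : Ss ≤ L' := by
    apply ge_of_tendsto hTy
    refine eventually_atTop.mpr ⟨1, fun m hm => ?_⟩
    have hlt : s < v m := by
      have h1 := hvge m hm
      have : (s : ℝ) < ((v m : ℚ) : ℝ) := lt_of_lt_of_le hs2 h1
      exact_mod_cast this
    exact le_of_lt (QAux.master hq0 hqne (hE s) (hE (v m)) hlt)
  linarith
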